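/- Let κ be an infinite cardinal, let ι be an index set of cardinality κ, and let M be an abelian group of cardinality κ with the following property: for every finitely generated subgroup M₁ of M, every abelian group M₂ of cardinality at most κ, and every injective group homomorphism j : M₁ → M₂, there exists an injective group homomorphism e : M₂ → M such that e ∘ j coincides with the inclusion of M₁ into M. Then M is isomorphic, as an abelian group, to the direct sum (⨁_{i ∈ ι} ℚ) ⊕ (⨁_{i ∈ ι} ℚ/ℤ). -/

import Mathlib

open Cardinal AddSubgroup Function Set

namespace Stmt18Aux

noncomputable section




variable {M : Type} [AddCommGroup M] {N : Type} [AddCommGroup N]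

def GFun (G : AddSubgroup (M × N)) : Prop := ∀ n : N, ((0 : M), n) ∈ G → n = 0
def GCofun (G : AddSubgroup (M × N)) : Prop := ∀ m : M, (m, (0 : N)) ∈ G → m = 0
def gdom (G : AddSubgroup (M × N)) : AddSubgroup M := G.map (AddMonoidHom.fst M N)
def gran (G : AddSubgroup (M × N)) : AddSubgroup N := G.map (AddMonoidHom.snd M N)

theorem mem_gdom {G : AddSubgroup (M × N)} {m : M} : m ∈ gdom G ↔ ∃ n, (m, n) ∈ G := by
  constructor
  · rintro ⟨⟨a, b⟩, hab, rfl⟩; exact ⟨b, hab⟩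
  · rintro ⟨n, hn⟩; exact ⟨(m, n), hn, rfl⟩

theorem mem_gran {G : AddSubgroup (M × N)} {n : N} : n ∈ gran G ↔ ∃ m, (m, n) ∈ G := by
  constructor
  · rintro ⟨⟨a, b⟩, hab, rfl⟩; exact ⟨a, hab⟩
  · rintro ⟨m, hm⟩; exact ⟨(m, n), hm, rfl⟩

theorem guniq {G : AddSubgroup (M × N)} (hF : GFun G) {m n n'}
    (h : (m, n) ∈ G) (h' : (m, n') ∈ G) : n = n' := by
  have := hF (n - n') (by simpa using G.sub_mem h h')
  exact sub_eq_zero.mp this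

theorem gcouniq {G : AddSubgroup (M × N)} (hC : GCofun G) {m m' n}
    (h : (m, n) ∈ G) (h' : (m', n) ∈ G) : m = m' := by
  have := hC (m - m') (by simpa using G.sub_mem h h')
  exact sub_eq_zero.mp this

/-- the function attached to a functional graph -/
def gfun (G : AddSubgroup (M × N)) (hF : GFun G) : ↥(gdom G) →+ N :=
  AddMonoidHom.mk' (fun a => (mem_gdom.mp a.2).choose) (by
    intro a b
    have ha := (mem_gdom.mp a.2).choose_spec
    have hb := (mem_gdom.mp b.2).choose_spec
    have hab := (mem_gdom.mp (a + b).2).choose_spec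
    exact guniq hF hab (by exact G.add_mem ha hb))

theorem gfun_spec {G : AddSubgroup (M × N)} (hF : GFun G) (a : ↥(gdom G)) :
    ((a : M), gfun G hF a) ∈ G := (mem_gdom.mp a.2).choose_spec

theorem gfun_eq {G : AddSubgroup (M × N)} (hF : GFun G) {m n} (h : (m, n) ∈ G)
    (hm : m ∈ gdom G) : gfun G hF ⟨m, hm⟩ = n :=
  guniq hF (gfun_spec hF ⟨m, hm⟩) h

theorem gfun_injective {G : AddSubgroup (M × N)} (hF : GFun G) (hC : GCofun G) :
    Function.Injective (gfun G hF) := by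
  intro a b hab
  have ha := gfun_spec hF a
  have hb := gfun_spec hF b
  have : ((a : M) - b, (0 : N)) ∈ G := by
    simpa [hab] using G.sub_mem ha hb
  exact Subtype.ext (sub_eq_zero.mp (hC _ this))

theorem gfun_mem_gran {G : AddSubgroup (M × N)} (hF : GFun G) (a : ↥(gdom G)) :
    gfun G hF a ∈ gran G := mem_gran.mpr ⟨a, gfun_spec hF a⟩

/-- flip a graph -/
def gflip (G : AddSubgroup (M × N)) : AddSubgroup (N × M) :=
  G.map (AddEquiv.prodComm : M × N ≃+ N × M).toAddMonoidHom

theorem mem_gflip {G : AddSubgroup (M × N)} {p : N × M} :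
    p ∈ gflip G ↔ (p.2, p.1) ∈ G := by
  rw [gflip, AddSubgroup.mem_map_equiv]
  rfl

theorem gflip_fun {G : AddSubgroup (M × N)} (hC : GCofun G) : GFun (gflip G) := by
  intro m hm
  exact hC m (by simpa using mem_gflip.mp hm)

theorem gflip_cofun {G : AddSubgroup (M × N)} (hF : GFun G) : GCofun (gflip G) := by
  intro n hn
  exact hF n (by simpa using mem_gflip.mp hn)

theorem gdom_gflip {G : AddSubgroup (M × N)} : gdom (gflip G) = gran G := by
  ext n; rw [mem_gdom, mem_gran]; simp only [mem_gflip]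





/-- divisibility -/
def IsDiv (Q : Type) [AddCommGroup Q] : Prop := ∀ (z : Q) (n : ℤ), n ≠ 0 → ∃ w : Q, n • w = z

theorem baer_of_isDiv (Q : Type) [AddCommGroup Q] (h : IsDiv Q) : Module.Baer ℤ Q := by
  intro I g
  obtain ⟨a, ha⟩ := (IsPrincipalIdealRing.principal I).principal
  rcases eq_or_ne a 0 with rfl | ha0
  · refine ⟨0, ?_⟩
    intro x hx
    have hx0 : x = 0 := by
      rw [ha, Submodule.span_zero_singleton] at hx
      simpa using hx
    subst hx0
    have h0 : (⟨(0 : ℤ), hx⟩ : I) = 0 := by ext; rfl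
    rw [h0]
    simp
  · have haI : a ∈ I := by rw [ha]; exact Submodule.mem_span_singleton_self a
    obtain ⟨y, hy⟩ := h (g ⟨a, haI⟩) a ha0
    refine ⟨LinearMap.toSpanSingleton ℤ Q y, ?_⟩
    intro x hx
    have hx' : x ∈ Submodule.span ℤ {a} := ha ▸ hx
    rw [Submodule.mem_span_singleton] at hx'
    obtain ⟨c, hc⟩ := hx'
    have hmem : (⟨x, hx⟩ : I) = c • (⟨a, haI⟩ : I) := by
      ext
      exact hc.symm
    rw [hmem, map_smul]
    have : LinearMap.toSpanSingleton ℤ Q y x = x • y := rfl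
    rw [this, ← hc, smul_assoc, hy]

theorem extension_of_isDiv {Q X Y : Type} [AddCommGroup Q] [AddCommGroup X] [AddCommGroup Y]
    (hQ : IsDiv Q) (f : X →+ Y) (hf : Function.Injective f) (g : X →+ Q) :
    ∃ h : Y →+ Q, h.comp f = g :=
  Module.Baer.extension_property_addMonoidHom (baer_of_isDiv Q hQ) f hf g


/-- a zero-preserving division function -/
theorem exists_divFun (Q : Type) [AddCommGroup Q] (h : IsDiv Q) (n : ℤ) (hn : n ≠ 0) :
    ∃ f : Q → Q, f 0 = 0 ∧ ∀ x, n • f x = x := by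
  classical
  refine ⟨fun x => if hx : x = 0 then 0 else (h x n hn).choose, by simp, ?_⟩
  intro x
  by_cases hx : x = 0
  · simp [hx]
  · simp only [dif_neg hx]
    exact (h x n hn).choose_spec

abbrev QZ : Type := ℚ ⧸ AddSubgroup.zmultiples (1 : ℚ)

def mkQ : ℚ →+ QZ := QuotientAddGroup.mk' _

theorem isDiv_rat : IsDiv ℚ := by
  intro z n hn
  refine ⟨(n : ℚ)⁻¹ * z, ?_⟩
  have : (n : ℚ) ≠ 0 := Int.cast_ne_zero.mpr hn
  rw [zsmul_eq_mul]
  field_simp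

theorem isDiv_QZ : IsDiv QZ := by
  intro z n hn
  obtain ⟨q, rfl⟩ := QuotientAddGroup.mk'_surjective (AddSubgroup.zmultiples (1 : ℚ)) z
  obtain ⟨w, hw⟩ := isDiv_rat q n hn
  exact ⟨QuotientAddGroup.mk' _ w, by rw [← map_zsmul, hw]⟩

theorem qz_ne_zero : mkQ (1/2 : ℚ) ≠ 0 := by
  intro hcon
  rw [mkQ, QuotientAddGroup.mk'_apply, QuotientAddGroup.eq_zero_iff] at hcon
  obtain ⟨k, hk⟩ := hcon
  have : (k : ℚ) = 1/2 := by simpa using hk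
  have h2 : (2 : ℚ) * k = 1 := by rw [this]; norm_num
  norm_cast at h2
  omega

instance : Nontrivial QZ := ⟨mkQ (1/2 : ℚ), 0, qz_ne_zero⟩

theorem mk_QZ_le : #QZ ≤ ℵ₀ := by
  have : Function.Surjective (mkQ) := QuotientAddGroup.mk'_surjective _
  calc #QZ ≤ #ℚ := Cardinal.mk_le_of_surjective this
  _ ≤ ℵ₀ := Cardinal.mk_le_aleph0

variable {ι : Type}

abbrev NN (ι : Type) : Type := (ι →₀ ℚ) × (ι →₀ QZ)

def NS (S : Set ι) : AddSubgroup (NN ι) :=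
  ((Finsupp.supported ℚ ℤ S).toAddSubgroup).prod ((Finsupp.supported QZ ℤ S).toAddSubgroup)

theorem mem_NS {S : Set ι} {x : NN ι} :
    x ∈ NS S ↔ (↑x.1.support ⊆ S ∧ ↑x.2.support ⊆ S) := by
  rw [NS, AddSubgroup.mem_prod]
  simp only [Submodule.mem_toAddSubgroup, Finsupp.mem_supported]

theorem isDiv_NS (S : Set ι) : IsDiv ↥(NS S) := by
  intro z n hn
  obtain ⟨f1, hf10, hf1⟩ := exists_divFun ℚ isDiv_rat n hn
  obtain ⟨f2, hf20, hf2⟩ := exists_divFun QZ isDiv_QZ n hn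
  have hz := mem_NS.mp z.2
  set w0 : NN ι := (Finsupp.mapRange f1 hf10 (z : NN ι).1,
    Finsupp.mapRange f2 hf20 (z : NN ι).2) with hw0
  have hw : w0 ∈ NS S := mem_NS.mpr
    ⟨subset_trans (Finset.coe_subset.mpr (Finsupp.support_mapRange (hf := hf10))) hz.1,
     subset_trans (Finset.coe_subset.mpr (Finsupp.support_mapRange (hf := hf20))) hz.2⟩
  refine ⟨⟨w0, hw⟩, ?_⟩
  apply Subtype.ext
  have hcoe : ((n • (⟨w0, hw⟩ : ↥(NS S)) : ↥(NS S)) : NN ι) = n • w0 := rfl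
  rw [hcoe]
  apply Prod.ext
  · apply Finsupp.ext
    intro i
    have h1 : (n • w0).1 i = n • (w0.1 i) :=
      map_zsmul ((Finsupp.applyAddHom i).comp (AddMonoidHom.fst (ι →₀ ℚ) (ι →₀ QZ))) n w0
    rw [h1, hw0]
    rw [Finsupp.mapRange_apply, hf1]
  · apply Finsupp.ext
    intro i
    have h1 : (n • w0).2 i = n • (w0.2 i) :=
      map_zsmul ((Finsupp.applyAddHom i).comp (AddMonoidHom.snd (ι →₀ ℚ) (ι →₀ QZ))) n w0
    rw [h1, hw0]
    rw [Finsupp.mapRange_apply, hf2]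

/-- an abelian group generated by one element is `ZMod d` for `d` the order -/
theorem exists_zmod_addEquiv {H : Type} [AddCommGroup H] (z : H)
    (hgen : ∀ q : H, ∃ k : ℤ, k • z = q) :
    Nonempty (ZMod (addOrderOf z) ≃+ H) := by
  set d := addOrderOf z with hd
  set φ : ℤ →+ H := zmultiplesHom H z with hφ
  have happ : ∀ k : ℤ, φ k = k • z := fun k => rfl
  have hsurj : Function.Surjective φ := fun q => (hgen q).imp (fun k hk => by rw [happ]; exact hk)
  have hker : φ.ker = AddSubgroup.zmultiples ((d : ℕ) : ℤ) := by
    ext k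
    rw [AddMonoidHom.mem_ker, Int.mem_zmultiples_iff, happ]
    exact addOrderOf_dvd_iff_zsmul_eq_zero.symm
  exact ⟨((Int.quotientZMultiplesNatEquivZMod d).symm.trans
    (QuotientAddGroup.quotientAddEquivOfEq hker.symm)).trans
    (QuotientAddGroup.quotientKerEquivOfSurjective φ hsurj)⟩

/-- cardinality bound on closures -/
theorem mk_addClosure_le {M : Type} [AddCommGroup M] (s : Set M) :
    #(AddSubgroup.closure s) ≤ max #s ℵ₀ := by
  classical
  have h1 : ((AddSubgroup.closure s : AddSubgroup M) : Set M)
      = ((Submodule.span ℤ s).toAddSubgroup : Set M) := by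
    rw [Submodule.span_int_eq_addSubgroupClosure]
  have h2 : (Submodule.span ℤ s) = LinearMap.range (Finsupp.linearCombination ℤ ((↑) : s → M)) := by
    rw [Finsupp.range_linearCombination, Subtype.range_coe]
  have e1 : #(AddSubgroup.closure s) = #(Submodule.span ℤ s) := by
    apply Cardinal.mk_congr
    exact Equiv.setCongr (by rw [h1]; rfl)
  rw [e1, h2]
  have hsurj : Function.Surjective
      (Finsupp.linearCombination ℤ ((↑) : s → M)).rangeRestrict :=
    LinearMap.surjective_rangeRestrict _
  refine le_trans (Cardinal.mk_le_of_surjective hsurj) ?_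
  rcases isEmpty_or_nonempty s with hs | hs
  · have : Subsingleton (↥s →₀ ℤ) := by infer_instance
    calc #(↥s →₀ ℤ) ≤ 1 := Cardinal.le_one_iff_subsingleton.mpr this
    _ ≤ ℵ₀ := le_of_lt Cardinal.one_lt_aleph0
    _ ≤ max #s ℵ₀ := le_max_right _ _
  · rw [Cardinal.mk_finsupp_of_infinite' ↥s ℤ, Cardinal.mk_int]

theorem mk_sup_zmultiples_le {M : Type} [AddCommGroup M] (A : AddSubgroup M) (m₀ : M) :
    #(A ⊔ AddSubgroup.zmultiples m₀ : AddSubgroup M) ≤ #A + ℵ₀ := by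
  have h1 : A ⊔ AddSubgroup.zmultiples m₀ = AddSubgroup.closure ((A : Set M) ∪ {m₀}) := by
    rw [AddSubgroup.closure_union, AddSubgroup.closure_eq, AddSubgroup.zmultiples_eq_closure]
  rw [h1]
  refine le_trans (mk_addClosure_le _) (max_le ?_ ?_)
  · refine le_trans (Cardinal.mk_union_le _ _) ?_
    rw [Cardinal.mk_singleton]
    exact add_le_add le_rfl (le_of_lt Cardinal.one_lt_aleph0)
  · exact le_add_self






variable {κ : Cardinal} {ι M : Type} [AddCommGroup M]

theorem isDiv_M (hκ : Cardinal.aleph0 ≤ κ) (hM : #M = κ)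
    (hprop : ∀ M₁ : AddSubgroup M, M₁.FG →
      ∀ (M₂ : Type) [AddCommGroup M₂], Cardinal.mk M₂ ≤ κ →
      ∀ j : M₁ →+ M₂, Function.Injective j →
      ∃ e : M₂ →+ M, Function.Injective e ∧ ∀ x : M₁, e (j x) = (x : M)) :
    IsDiv M := by
  intro x nn hn
  set M₁ : AddSubgroup M := AddSubgroup.zmultiples x with hM₁
  have hxm : x ∈ M₁ := AddSubgroup.mem_zmultiples x
  have hfg : M₁.FG := ⟨{x}, by simp [hM₁, AddSubgroup.zmultiples_eq_closure]⟩
  set g0 : ↥M₁ × ℤ := ((⟨x, hxm⟩ : ↥M₁), (-nn : ℤ)) with hg0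
  set H := AddSubgroup.zmultiples g0 with hH
  set M₂ := (↥M₁ × ℤ) ⧸ H with hM₂
  have hcard : #M₂ ≤ κ := by
    refine le_trans (Cardinal.mk_le_of_surjective (QuotientAddGroup.mk'_surjective H)) ?_
    rw [Cardinal.mk_prod]
    simp only [Cardinal.lift_id, Cardinal.mk_int]
    calc #↥M₁ * ℵ₀ ≤ κ * κ := by
          exact mul_le_mul' (le_trans (Cardinal.mk_subtype_le _) (le_of_eq hM)) hκ
    _ = κ := Cardinal.mul_eq_self hκ
  set j : ↥M₁ →+ M₂ := (QuotientAddGroup.mk' H).comp (AddMonoidHom.inl ↥M₁ ℤ) with hj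
  have hjinj : Function.Injective j := by
    rw [injective_iff_map_eq_zero]
    intro a ha
    have : ((a, (0 : ℤ)) : ↥M₁ × ℤ) ∈ H := by
      rwa [hj, AddMonoidHom.comp_apply, AddMonoidHom.inl_apply,
        QuotientAddGroup.mk'_apply, QuotientAddGroup.eq_zero_iff] at ha
    obtain ⟨k, hk⟩ := this
    have h2 : k • (-nn) = 0 := congrArg Prod.snd hk
    have hk0 : k = 0 := by
      rw [zsmul_eq_mul] at h2
      rcases mul_eq_zero.mp h2 with h | h
      · exact h
      · exact absurd (neg_eq_zero.mp h) hn
    have h1 : k • (⟨x, hxm⟩ : ↥M₁) = a := congrArg Prod.fst hk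
    rw [hk0, zero_zsmul] at h1
    exact h1.symm
  obtain ⟨e, he, hce⟩ := hprop M₁ hfg M₂ hcard j hjinj
  refine ⟨e ((QuotientAddGroup.mk' H) ((0 : ↥M₁), (1 : ℤ))), ?_⟩
  have h1 : (QuotientAddGroup.mk' H) ((⟨x, hxm⟩ : ↥M₁), (0 : ℤ))
      = nn • (QuotientAddGroup.mk' H) ((0 : ↥M₁), (1 : ℤ)) := by
    rw [← map_zsmul, QuotientAddGroup.mk'_apply, QuotientAddGroup.mk'_apply]
    rw [QuotientAddGroup.eq_iff_sub_mem]
    have : ((⟨x, hxm⟩ : ↥M₁), (0 : ℤ)) - nn • ((0 : ↥M₁), (1 : ℤ)) = g0 := by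
      rw [hg0]
      apply Prod.ext
      · simp
      · simp
    rw [this]
    exact AddSubgroup.mem_zmultiples g0
  have h2 : e (j ⟨x, hxm⟩) = x := hce _
  rw [hj, AddMonoidHom.comp_apply, AddMonoidHom.inl_apply, h1, map_zsmul] at h2
  exact h2

theorem exists_univ_embed (hκ : Cardinal.aleph0 ≤ κ) (hM : #M = κ)
    (hprop : ∀ M₁ : AddSubgroup M, M₁.FG →
      ∀ (M₂ : Type) [AddCommGroup M₂], Cardinal.mk M₂ ≤ κ →
      ∀ j : M₁ →+ M₂, Function.Injective j →
      ∃ e : M₂ →+ M, Function.Injective e ∧ ∀ x : M₁, e (j x) = (x : M))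
    (C : Type) [AddCommGroup C] (hC : #C ≤ κ) : ∃ u : C →+ M, Injective u := by
  have hfg : (⊥ : AddSubgroup M).FG := ⟨∅, by simp⟩
  have hsub : Subsingleton ↥(⊥ : AddSubgroup M) :=
    ⟨fun a b => Subtype.ext (by rw [AddSubgroup.mem_bot.mp a.2, AddSubgroup.mem_bot.mp b.2])⟩
  obtain ⟨e, he, -⟩ := hprop ⊥ hfg C hC (0 : _ →+ C) (Function.injective_of_subsingleton _)
  exact ⟨e, he⟩


-- ## cardinalities of the target
theorem mk_NN {κ : Cardinal} {ι : Type} (hκ : ℵ₀ ≤ κ) (hι : #ι = κ) : #(NN ι) = κ := by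
  have hinf : Infinite ι := by rw [Cardinal.infinite_iff, hι]; exact hκ
  have h1 : #(ι →₀ ℚ) = κ := by
    rw [Cardinal.mk_finsupp_of_infinite ι ℚ, hι, Cardinal.mk_eq_aleph0 ℚ]
    exact max_eq_left hκ
  have h2 : #(ι →₀ QZ) = κ := by
    rw [Cardinal.mk_finsupp_of_infinite ι QZ, hι]
    exact max_eq_left (le_trans mk_QZ_le hκ)
  rw [show NN ι = ((ι →₀ ℚ) × (ι →₀ QZ)) from rfl, Cardinal.mk_prod,
    Cardinal.lift_id, Cardinal.lift_id, h1, h2]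
  exact Cardinal.mul_eq_self hκ

theorem mk_zmod_le (d : ℕ) : #(ZMod d) ≤ ℵ₀ :=
  le_trans (Cardinal.mk_le_of_surjective ZMod.intCast_surjective)
    (le_of_eq Cardinal.mk_int)

theorem mk_finsupp_zmod_le {κ : Cardinal} {ι : Type} (hκ : ℵ₀ ≤ κ) (hι : #ι = κ) (d : ℕ) :
    #(ι →₀ ZMod d) ≤ κ := by
  rcases subsingleton_or_nontrivial (ZMod d) with hs | hn
  · have : Subsingleton (ι →₀ ZMod d) := by
      constructor
      intro a b
      apply Finsupp.ext
      intro i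
      exact Subsingleton.elim _ _
    exact le_trans (Cardinal.le_one_iff_subsingleton.mpr this) (le_trans Cardinal.one_le_aleph0 hκ)
  · have hinf : Infinite ι := by rw [Cardinal.infinite_iff, hι]; exact hκ
    rw [Cardinal.mk_finsupp_of_infinite ι (ZMod d), hι]
    exact max_le le_rfl (le_trans (mk_zmod_le d) hκ)

-- ## smallness
def SmallSub {X : Type} [AddCommGroup X] (κ : Cardinal) (B : AddSubgroup X) : Prop :=
  (κ = ℵ₀ ∧ B.FG) ∨ (ℵ₀ < κ ∧ #B < κ)

-- ## FG lemmas
theorem addFG_map {G H : Type} [AddCommGroup G] [AddCommGroup H] {P : AddSubgroup G}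
    (h : P.FG) (e : G →+ H) : (P.map e).FG := by
  classical
  obtain ⟨S, hS⟩ := h
  exact ⟨S.image e, by rw [Finset.coe_image, ← AddMonoidHom.map_closure, hS]⟩

theorem addFG_sup {G : Type} [AddCommGroup G] {P Q : AddSubgroup G}
    (hP : P.FG) (hQ : Q.FG) : (P ⊔ Q).FG := by
  classical
  obtain ⟨S, hS⟩ := hP
  obtain ⟨T, hT⟩ := hQ
  exact ⟨S ∪ T, by rw [Finset.coe_union, AddSubgroup.closure_union, hS, hT]⟩

theorem addFG_zmultiples {G : Type} [AddCommGroup G] (x : G) :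
    (AddSubgroup.zmultiples x).FG := ⟨{x}, by simp [AddSubgroup.zmultiples_eq_closure]⟩

theorem addFG_range {G H : Type} [AddCommGroup G] [AddCommGroup H] {B : AddSubgroup G}
    (h : B.FG) (Φ : ↥B →+ H) : Φ.range.FG := by
  have h1 : AddGroup.FG ↥B := (AddGroup.fg_iff_addSubgroup_fg B).mpr h
  have h2 : (⊤ : AddSubgroup ↥B).FG := AddGroup.fg_def.mp h1
  have h3 : Φ.range = (⊤ : AddSubgroup ↥B).map Φ := by
    ext y
    simp [AddMonoidHom.mem_range]
  rw [h3]
  exact addFG_map h2 Φ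

-- ## support sets
def psupp {ι : Type} (b : NN ι) : Set ι := (b.1.support : Set ι) ∪ (b.2.support : Set ι)

theorem psupp_finite {ι : Type} (b : NN ι) : (psupp b).Finite :=
  (Set.finite_coe_iff.mp (by exact FinsetCoe.fintype _ |>.finite)).union
    (Set.finite_coe_iff.mp (by exact FinsetCoe.fintype _ |>.finite))

def suppSet {ι : Type} (B : AddSubgroup (NN ι)) : Set ι := ⋃ b ∈ (B : Set (NN ι)), psupp b

theorem le_NS_suppSet {ι : Type} (B : AddSubgroup (NN ι)) : B ≤ NS (suppSet B) := by
  intro b hb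
  rw [mem_NS]
  have h : psupp b ⊆ suppSet B := Set.subset_biUnion_of_mem (u := psupp) hb
  exact ⟨fun i hi => h (Or.inl hi), fun i hi => h (Or.inr hi)⟩

theorem psupp_mem_closure {ι : Type} {s : Set (NN ι)} {b : NN ι}
    (hb : b ∈ AddSubgroup.closure s) : psupp b ⊆ ⋃ a ∈ s, psupp a := by
  classical
  induction hb using AddSubgroup.closure_induction with
  | mem a ha => exact Set.subset_biUnion_of_mem ha
  | zero =>
      intro i hi
      rcases hi with hi | hi <;> simp at hi
  | add a c _ _ iha ihc =>
      intro i hi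
      rcases hi with hi | hi
      · rcases Finset.mem_union.mp (Finsupp.support_add (by exact hi)) with h | h
        · exact iha (Or.inl h)
        · exact ihc (Or.inl h)
      · rcases Finset.mem_union.mp (Finsupp.support_add (by exact hi)) with h | h
        · exact iha (Or.inr h)
        · exact ihc (Or.inr h)
  | neg a _ iha =>
      intro i hi
      rcases hi with hi | hi
      · exact iha (Or.inl (by simpa using hi))
      · exact iha (Or.inr (by simpa using hi))

theorem mk_suppSet_lt {κ : Cardinal} {ι : Type} (hκ : ℵ₀ ≤ κ) (hι : #ι = κ)
    {B : AddSubgroup (NN ι)} (hB : SmallSub κ B) : #(suppSet B) < κ := by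
  rcases hB with ⟨hk, hfg⟩ | ⟨hk, hcard⟩
  · obtain ⟨S, hS⟩ := hfg
    have hsub : suppSet B ⊆ ⋃ a ∈ (S : Set (NN ι)), psupp a := by
      apply Set.iUnion₂_subset
      intro b hb
      exact psupp_mem_closure (by rw [hS]; exact hb)
    have hfin : (⋃ a ∈ (S : Set (NN ι)), psupp a).Finite :=
      Set.Finite.biUnion (S.finite_toSet) (fun a _ => psupp_finite a)
    rw [hk]
    exact (hfin.subset hsub).lt_aleph0
  · rw [suppSet, Set.biUnion_eq_iUnion]
    refine lt_of_le_of_lt (Cardinal.mk_iUnion_le _) ?_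
    have h2 : ⨆ b : ↥(B : Set (NN ι)), #(psupp (b : NN ι)) ≤ ℵ₀ :=
      ciSup_le' (fun b => ((psupp_finite _).lt_aleph0).le)
    refine lt_of_le_of_lt (mul_le_mul' le_rfl h2) ?_
    refine lt_of_le_of_lt (Cardinal.mul_le_max _ _) ?_
    have hc : #↥(B : Set (NN ι)) < κ := hcard
    exact max_lt (max_lt hc hk) hk

theorem exists_fresh_index {κ : Cardinal} {ι : Type} (hι : #ι = κ)
    {T : Set ι} (hT : #T < κ) : ∃ i : ι, i ∉ T := by
  by_contra hcon
  push_neg at hcon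
  have : (Set.univ : Set ι) ⊆ T := fun i _ => hcon i
  have h1 : #ι ≤ #T := by
    rw [← Cardinal.mk_univ]
    exact Cardinal.mk_le_mk_of_subset this
  rw [hι] at h1
  exact absurd h1 (not_le.mpr hT)

-- ## graph cardinality helpers
theorem mk_gdom_le {M N : Type} [AddCommGroup M] [AddCommGroup N] (G : AddSubgroup (M × N)) :
    #(gdom G) ≤ #G := by
  have h : ((gdom G : AddSubgroup M) : Set M) = Prod.fst '' (G : Set (M × N)) := by
    rw [gdom]
    rfl
  have e1 : #(gdom G) = #(Prod.fst '' (G : Set (M × N))) :=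
    Cardinal.mk_congr (Equiv.setCongr h)
  rw [e1]
  exact Cardinal.mk_image_le

theorem mk_gran_le {M N : Type} [AddCommGroup M] [AddCommGroup N] (G : AddSubgroup (M × N)) :
    #(gran G) ≤ #G := by
  have h : ((gran G : AddSubgroup N) : Set N) = Prod.snd '' (G : Set (M × N)) := by
    rw [gran]
    rfl
  have e1 : #(gran G) = #(Prod.snd '' (G : Set (M × N))) :=
    Cardinal.mk_congr (Equiv.setCongr h)
  rw [e1]
  exact Cardinal.mk_image_le

-- ## the forward step
theorem forward_step {κ : Cardinal} {ι M : Type} [AddCommGroup M] (hκ : ℵ₀ ≤ κ) (hι : #ι = κ)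
    (G : AddSubgroup (M × NN ι)) (hF : GFun G) (hC : GCofun G) (hsm : SmallSub κ G) (m₀ : M) :
    ∃ G' : AddSubgroup (M × NN ι), G ≤ G' ∧ GFun G' ∧ GCofun G' ∧ m₀ ∈ gdom G' ∧
      #G' ≤ #G + ℵ₀ ∧ (G.FG → G'.FG) := by
  classical
  set S := suppSet (gran G) with hS
  have hranNS : ∀ a : ↥(gdom G), gfun G hF a ∈ NS S :=
    fun a => le_NS_suppSet _ (gfun_mem_gran hF a)
  set fS : ↥(gdom G) →+ ↥(NS S) := (gfun G hF).codRestrict (NS S) hranNS with hfS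
  have hAle : gdom G ≤ gdom G ⊔ AddSubgroup.zmultiples m₀ := le_sup_left
  set A'' := gdom G ⊔ AddSubgroup.zmultiples m₀ with hA''
  set incl : ↥(gdom G) →+ ↥A'' := AddSubgroup.inclusion hAle with hincl
  have hinclinj : Injective incl := AddSubgroup.inclusion_injective hAle
  obtain ⟨h, hh⟩ := extension_of_isDiv (isDiv_NS S) incl hinclinj fS
  set Aq := (gdom G).addSubgroupOf A'' with hAq
  set π : ↥A'' →+ (↥A'' ⧸ Aq) := QuotientAddGroup.mk' Aq with hπ
  have hm₀A'' : m₀ ∈ A'' := (le_sup_right : AddSubgroup.zmultiples m₀ ≤ A'') (AddSubgroup.mem_zmultiples m₀)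
  set z := π ⟨m₀, hm₀A''⟩ with hz
  have hπA : ∀ a : ↥A'', (a : M) ∈ gdom G → π a = 0 := by
    intro a ha
    rw [hπ, QuotientAddGroup.mk'_apply, QuotientAddGroup.eq_zero_iff]
    exact AddSubgroup.mem_addSubgroupOf.mpr ha
  have hgen : ∀ q, ∃ k : ℤ, k • z = q := by
    intro q
    obtain ⟨a, rfl⟩ := QuotientAddGroup.mk'_surjective Aq q
    have ha : (a : M) ∈ gdom G ⊔ AddSubgroup.zmultiples m₀ := a.2
    obtain ⟨b, hb, c, hc, hbc⟩ := AddSubgroup.mem_sup.mp ha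
    obtain ⟨k, hk⟩ := AddSubgroup.mem_zmultiples_iff.mp hc
    refine ⟨k, ?_⟩
    have hsplit : (a : ↥A'') = ⟨b, hAle hb⟩ + k • (⟨m₀, hm₀A''⟩ : ↥A'') := by
      apply Subtype.ext
      show (a : M) = b + k • m₀
      rw [← hbc, hk]
    have : π a = π ⟨b, hAle hb⟩ + k • z := by
      rw [hsplit, map_add, map_zsmul]
    rw [this, hπA ⟨b, hAle hb⟩ hb, zero_add]
  set d := addOrderOf z with hd
  obtain ⟨ψ⟩ := exists_zmod_addEquiv z hgen
  have hsmran : SmallSub κ (gran G) := by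
    rcases hsm with ⟨hk, hfg⟩ | ⟨hk, hcard⟩
    · exact Or.inl ⟨hk, addFG_map hfg _⟩
    · exact Or.inr ⟨hk, lt_of_le_of_lt (mk_gran_le G) hcard⟩
  obtain ⟨i, hi⟩ := exists_fresh_index hι (mk_suppSet_lt hκ hι hsmran)
  set w : NN ι := if d = 0 then ((Finsupp.single i (1 : ℚ), 0) : NN ι)
    else ((0, Finsupp.single i (mkQ (1 / (d : ℚ)))) : NN ι) with hw
  set χ : NN ι →+ ℚ × QZ :=
    AddMonoidHom.prodMap (Finsupp.applyAddHom i) (Finsupp.applyAddHom i) with hχ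
  have hw0 : ((d : ℕ) : ℤ) • w = 0 := by
    rcases eq_or_ne d 0 with hd0 | hd0
    · rw [hd0]
      simp
    · rw [hw, if_neg hd0]
      have : ((d : ℕ) : ℤ) • (Finsupp.single i (mkQ (1 / (d : ℚ)))) =
          Finsupp.single i (((d : ℕ) : ℤ) • mkQ (1 / (d : ℚ))) :=
        (map_zsmul (Finsupp.singleAddHom (M := QZ) i) ((d : ℕ) : ℤ) (mkQ (1 / (d : ℚ)))).symm
      have h2 : ((d : ℕ) : ℤ) • mkQ (1 / (d : ℚ)) = mkQ (((d : ℕ) : ℤ) • (1 / (d : ℚ))) :=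
        (map_zsmul mkQ _ _).symm
      have h3 : (((d : ℕ) : ℤ) • (1 / (d : ℚ))) = 1 := by
        have : ((d : ℕ) : ℚ) ≠ 0 := Nat.cast_ne_zero.mpr hd0
        rw [zsmul_eq_mul]
        push_cast
        field_simp
      have h4 : mkQ (1 : ℚ) = 0 := by
        rw [mkQ, QuotientAddGroup.mk'_apply, QuotientAddGroup.eq_zero_iff]
        exact AddSubgroup.mem_zmultiples 1
      apply Prod.ext
      · simp
      · show ((d : ℕ) : ℤ) • (Finsupp.single i (mkQ (1 / (d : ℚ)))) = 0
        rw [this, h2, h3, h4, Finsupp.single_zero]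
  have hwk : ∀ k : ℤ, χ (k • w) = 0 → ((d : ℕ) : ℤ) ∣ k := by
    intro k hk
    rw [map_zsmul] at hk
    rcases eq_or_ne d 0 with hd0 | hd0
    · have hχw : χ w = (1, 0) := by
        rw [hw, if_pos hd0, hχ]
        apply Prod.ext
        · show (Finsupp.single i (1 : ℚ)) i = 1
          simp
        · show ((0 : ι →₀ QZ)) i = 0
          simp
      rw [hχw] at hk
      have : k • ((1 : ℚ), (0 : QZ)) = ((k : ℚ), (0 : QZ)) := by
        apply Prod.ext
        · show k • (1 : ℚ) = (k : ℚ)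
          simp
        · simp
      rw [this, Prod.ext_iff] at hk
      have hk1 : (k : ℚ) = 0 := by simpa using hk.1
      have hk0 : k = 0 := by exact_mod_cast hk1
      rw [hd0, hk0]
      simp
    · have hχw : χ w = (0, mkQ (1 / (d : ℚ))) := by
        rw [hw, if_neg hd0, hχ]
        apply Prod.ext
        · show ((0 : ι →₀ ℚ)) i = 0
          simp
        · show (Finsupp.single i (mkQ (1 / (d : ℚ)))) i = mkQ (1 / (d : ℚ))
          simp
      rw [hχw] at hk
      have h1 : k • ((0 : ℚ), mkQ (1 / (d : ℚ))) = ((0 : ℚ), mkQ (k * (1 / (d : ℚ)))) := by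
        apply Prod.ext
        · simp
        · show k • mkQ (1 / (d : ℚ)) = mkQ (k * (1 / (d : ℚ)))
          rw [← map_zsmul mkQ]
          congr 1
      rw [h1, Prod.ext_iff] at hk
      have h2 : mkQ ((k : ℚ) * (1 / (d : ℚ))) = 0 := by simpa using hk.2
      rw [mkQ, QuotientAddGroup.mk'_apply, QuotientAddGroup.eq_zero_iff] at h2
      obtain ⟨c, hc⟩ := h2
      have hc' : (c : ℚ) = (k : ℚ) * (1 / (d : ℚ)) := by
        simpa [zsmul_eq_mul] using hc
      have hdQ : ((d : ℕ) : ℚ) ≠ 0 := Nat.cast_ne_zero.mpr hd0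
      have : ((c * (d : ℕ) : ℤ) : ℚ) = ((k : ℤ) : ℚ) := by
        push_cast
        rw [hc']
        field_simp
      have hcd : c * ((d : ℕ) : ℤ) = k := by exact_mod_cast this
      exact ⟨c, by rw [← hcd]; ring⟩
  set lifthom : ZMod d →+ NN ι := ZMod.lift d ⟨zmultiplesHom (NN ι) w, hw0⟩ with hlift
  set g' : (↥A'' ⧸ Aq) →+ NN ι := lifthom.comp ψ.symm.toAddMonoidHom with hg'
  set e : ↥A'' →+ NN ι := ((NS S).subtype.comp h) + g'.comp π with he
  have key1 : ∀ a : ↥(gdom G), e (incl a) = gfun G hF a := by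
    intro a
    have h1 : π (incl a) = 0 := hπA (incl a) a.2
    rw [he]
    show (NS S).subtype (h (incl a)) + g' (π (incl a)) = gfun G hF a
    rw [h1, map_zero, add_zero]
    have h2 : h (incl a) = fS a := DFunLike.congr_fun hh a
    rw [h2, hfS]
    rfl
  have key2 : Injective e := by
    rw [injective_iff_map_eq_zero]
    intro a ha
    have hNS := mem_NS.mp (h a).2
    have hha1 : ((h a : NN ι)).1 i = 0 :=
      Finsupp.notMem_support_iff.mp (fun hmem => hi (hNS.1 hmem))
    have hha2 : ((h a : NN ι)).2 i = 0 :=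
      Finsupp.notMem_support_iff.mp (fun hmem => hi (hNS.2 hmem))
    have hχh : χ ((NS S).subtype (h a)) = 0 := by
      rw [hχ]
      apply Prod.ext
      · exact hha1
      · exact hha2
    have hea : χ (e a) = 0 := by rw [ha, map_zero]
    have he2 : χ (g' (π a)) = 0 := by
      rw [he] at hea
      have : χ ((NS S).subtype (h a) + g' (π a)) = 0 := hea
      rw [map_add, hχh, zero_add] at this
      exact this
    obtain ⟨k, hk⟩ := ZMod.intCast_surjective (ψ.symm (π a))
    have hg'val : g' (π a) = k • w := by
      rw [hg']
      show lifthom (ψ.symm (π a)) = k • w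
      rw [← hk]
      exact ZMod.lift_coe _ _ k
    rw [hg'val] at he2
    have hdvd := hwk k he2
    have hcast : ((k : ℤ) : ZMod d) = 0 := by
      rw [ZMod.intCast_zmod_eq_zero_iff_dvd]
      exact_mod_cast hdvd
    have hπa : π a = 0 := by
      have : ψ.symm (π a) = 0 := by rw [← hk, hcast]
      have := congrArg ψ this
      rwa [AddEquiv.apply_symm_apply, map_zero] at this
    have hmem : (a : M) ∈ gdom G := AddSubgroup.mem_addSubgroupOf.mp
      (by rwa [hπ, QuotientAddGroup.mk'_apply, QuotientAddGroup.eq_zero_iff] at hπa)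
    have hea0 : e a = (NS S).subtype (h a) := by
      have h5 : e a = (NS S).subtype (h a) + g' (π a) := rfl
      rw [h5, hπa, map_zero, add_zero]
    have hh0 : h a = 0 := by
      apply Subtype.val_injective
      show ((h a : ↥(NS S)) : NN ι) = ((0 : ↥(NS S)) : NN ι)
      have h6 : ((h a : ↥(NS S)) : NN ι) = e a := hea0.symm
      rw [h6, ha]
      rfl
    set a0 : ↥(gdom G) := ⟨(a : M), hmem⟩ with ha0
    have hincla : incl a0 = a := Subtype.ext rfl
    have h7 : fS a0 = h (incl a0) := (DFunLike.congr_fun hh a0).symm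
    have : fS a0 = 0 := by rw [h7, hincla, hh0]
    have hfa0 : gfun G hF a0 = 0 := by
      have := congrArg Subtype.val this
      exact this
    have := gfun_injective hF hC (by rw [hfa0, map_zero] : gfun G hF a0 = gfun G hF 0)
    have : (a : M) = 0 := congrArg Subtype.val this
    exact Subtype.ext this
  set Φ : ↥A'' →+ M × NN ι := A''.subtype.prod e with hΦ
  refine ⟨Φ.range, ?_, ?_, ?_, ?_, ?_, ?_⟩
  · rintro ⟨m, n⟩ hmn
    have hm : m ∈ gdom G := mem_gdom.mpr ⟨n, hmn⟩
    have hn : n = gfun G hF ⟨m, hm⟩ := (gfun_eq hF hmn hm).symm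
    refine ⟨incl ⟨m, hm⟩, ?_⟩
    rw [hΦ, AddMonoidHom.prod_apply]
    have : (A''.subtype) (incl ⟨m, hm⟩) = m := rfl
    rw [this, key1, ← hn]
  · intro n hn
    obtain ⟨a, ha⟩ := hn
    have ha1 : (a : M) = 0 := congrArg Prod.fst ha
    have ha2 : e a = n := congrArg Prod.snd ha
    have h8 : a = 0 := Subtype.ext ha1
    rw [h8, map_zero] at ha2
    exact ha2.symm
  · intro m hm
    obtain ⟨a, ha⟩ := hm
    have ha1 : (a : M) = m := congrArg Prod.fst ha
    have ha2 : e a = 0 := congrArg Prod.snd ha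
    have h8 : a = 0 := key2 (by rw [ha2, map_zero])
    rw [← ha1, h8]
    rfl
  · exact mem_gdom.mpr ⟨e ⟨m₀, hm₀A''⟩, ⟨⟨m₀, hm₀A''⟩, rfl⟩⟩
  · refine le_trans (Cardinal.mk_le_of_surjective Φ.rangeRestrict_surjective) ?_
    refine le_trans (mk_sup_zmultiples_le (gdom G) m₀) ?_
    exact add_le_add (mk_gdom_le G) le_rfl
  · intro hfg
    have hA : (gdom G).FG := addFG_map hfg _
    have hA'' : A''.FG := addFG_sup hA (addFG_zmultiples m₀)
    exact addFG_range hA'' Φ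

-- ## the backward step
theorem backward_step {κ : Cardinal} {ι M : Type} [AddCommGroup M] (hκ : ℵ₀ ≤ κ) (hι : #ι = κ)
    (hM : #M = κ)
    (hprop : ∀ M₁ : AddSubgroup M, M₁.FG →
      ∀ (M₂ : Type) [AddCommGroup M₂], Cardinal.mk M₂ ≤ κ →
      ∀ j : M₁ →+ M₂, Function.Injective j →
      ∃ e : M₂ →+ M, Function.Injective e ∧ ∀ x : M₁, e (j x) = (x : M))
    (G : AddSubgroup (M × NN ι)) (hF : GFun G) (hC : GCofun G) (hsm : SmallSub κ G)
    (n₀ : NN ι) :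
    ∃ G' : AddSubgroup (M × NN ι), G ≤ G' ∧ GFun G' ∧ GCofun G' ∧ n₀ ∈ gran G' ∧
      #G' ≤ #G + ℵ₀ ∧ (G.FG → G'.FG) := by
  classical
  have hFf : GFun (gflip G) := gflip_fun hC
  have hCf : GCofun (gflip G) := gflip_cofun hF
  set B : AddSubgroup (NN ι) := gdom (gflip G) with hB
  have hBr : B = gran G := gdom_gflip
  set B'' := B ⊔ AddSubgroup.zmultiples n₀ with hB''
  have hBle : B ≤ B'' := le_sup_left
  have hn₀ : n₀ ∈ B'' := (le_sup_right : AddSubgroup.zmultiples n₀ ≤ B'')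
    (AddSubgroup.mem_zmultiples n₀)
  have hranB'' : ∀ {n : NN ι}, n ∈ gran G → n ∈ B'' := fun hn => hBle (by rw [hBr]; exact hn)
  have hcardB'' : #↥B'' ≤ #G + ℵ₀ := by
    refine le_trans (le_of_eq (by rw [hB''])) ?_
    refine le_trans (mk_sup_zmultiples_le B n₀) ?_
    refine add_le_add ?_ le_rfl
    rw [hBr]
    exact mk_gran_le G
  obtain ⟨e, heinj, hagree⟩ : ∃ e : ↥B'' →+ M, Injective e ∧
      ∀ (m : M) (n : NN ι) (hmn : (m, n) ∈ G), e ⟨n, hranB'' (mem_gran.mpr ⟨m, hmn⟩)⟩ = m := by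
    rcases hsm with ⟨hk, hfg⟩ | ⟨hk, hcard⟩
    · -- countable case : use hprop directly
      have hAfg : (gdom G).FG := addFG_map hfg _
      have hfmem : ∀ a : ↥(gdom G), gfun G hF a ∈ B'' :=
        fun a => hranB'' (gfun_mem_gran hF a)
      set j : ↥(gdom G) →+ ↥B'' := (gfun G hF).codRestrict B'' hfmem with hj
      have hjinj : Injective j := by
        intro a b hab
        exact gfun_injective hF hC (congrArg Subtype.val hab)
      have hcard2 : #↥B'' ≤ κ :=
        le_trans (Cardinal.mk_le_of_injective Subtype.val_injective)
          (le_of_eq (mk_NN hκ hι))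
      obtain ⟨eM, heMinj, hecomp⟩ := hprop (gdom G) hAfg ↥B'' hcard2 j hjinj
      refine ⟨eM, heMinj, ?_⟩
      intro m n hmn
      have hm : m ∈ gdom G := mem_gdom.mpr ⟨n, hmn⟩
      have hn : gfun G hF ⟨m, hm⟩ = n := gfun_eq hF hmn hm
      have hja : j ⟨m, hm⟩ = ⟨n, hranB'' (mem_gran.mpr ⟨m, hmn⟩)⟩ := by
        apply Subtype.ext
        exact hn
      rw [← hja]
      exact hecomp ⟨m, hm⟩
    · -- uncountable case : use divisibility and a fresh copy
      have hdivM : IsDiv M := isDiv_M hκ hM hprop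
      set finv := gfun (gflip G) hFf with hfinv
      set incl : ↥B →+ ↥B'' := AddSubgroup.inclusion hBle with hincl
      have hinclinj : Injective incl := AddSubgroup.inclusion_injective hBle
      obtain ⟨h, hh⟩ := extension_of_isDiv hdivM incl hinclinj finv
      set Bq := B.addSubgroupOf B'' with hBq
      set π : ↥B'' →+ (↥B'' ⧸ Bq) := QuotientAddGroup.mk' Bq with hπ
      set z := π ⟨n₀, hn₀⟩ with hz
      have hπB : ∀ b : ↥B'', (b : NN ι) ∈ B → π b = 0 := by
        intro b hb
        rw [hπ, QuotientAddGroup.mk'_apply, QuotientAddGroup.eq_zero_iff]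
        exact AddSubgroup.mem_addSubgroupOf.mpr hb
      have hgen : ∀ q, ∃ k : ℤ, k • z = q := by
        intro q
        obtain ⟨b, rfl⟩ := QuotientAddGroup.mk'_surjective Bq q
        have hb : (b : NN ι) ∈ B ⊔ AddSubgroup.zmultiples n₀ := b.2
        obtain ⟨b1, hb1, c, hc, hbc⟩ := AddSubgroup.mem_sup.mp hb
        obtain ⟨k, hk⟩ := AddSubgroup.mem_zmultiples_iff.mp hc
        refine ⟨k, ?_⟩
        have hsplit : (b : ↥B'') = ⟨b1, hBle hb1⟩ + k • (⟨n₀, hn₀⟩ : ↥B'') := by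
          apply Subtype.ext
          show (b : NN ι) = b1 + k • n₀
          rw [← hbc, hk]
        have : π b = π ⟨b1, hBle hb1⟩ + k • z := by
          rw [hsplit, map_add, map_zsmul]
        rw [this, hπB ⟨b1, hBle hb1⟩ hb1, zero_add]
      set d := addOrderOf z with hd
      obtain ⟨ψ⟩ := exists_zmod_addEquiv z hgen
      obtain ⟨u, huinj⟩ := exists_univ_embed hκ hM hprop (ι →₀ ZMod d)
        (mk_finsupp_zmod_le hκ hι d)
      set Y := h.range with hY
      have hYlt : #↥Y < κ := by
        have h1 : #↥Y ≤ #↥B'' :=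
          Cardinal.mk_le_of_surjective h.rangeRestrict_surjective
        refine lt_of_le_of_lt (le_trans h1 hcardB'') ?_
        rw [Cardinal.add_eq_max' le_rfl]
        exact max_lt hcard hk
      have hfresh : ∃ i : ι, ∀ k : ℤ, k • u (Finsupp.single i 1) ∈ Y → ((d : ℕ) : ℤ) ∣ k := by
        by_contra hcon
        push_neg at hcon
        choose k hkY hkd using hcon
        have hinj : Injective (fun i : ι => (⟨k i • u (Finsupp.single i 1), hkY i⟩ : ↥Y)) := by
          intro i j hij
          have hval : k i • u (Finsupp.single i (1 : ZMod d))
              = k j • u (Finsupp.single j (1 : ZMod d)) := congrArg Subtype.val hij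
          rw [← map_zsmul u, ← map_zsmul u] at hval
          have hval2 : (k i • Finsupp.single i (1 : ZMod d))
              = (k j • Finsupp.single j (1 : ZMod d)) := huinj hval
          have hsi : ∀ (i0 : ι) (k0 : ℤ), k0 • Finsupp.single i0 (1 : ZMod d)
              = Finsupp.single i0 ((k0 : ZMod d)) := by
            intro i0 k0
            have h1 : k0 • Finsupp.single i0 (1 : ZMod d)
                = Finsupp.single i0 (k0 • (1 : ZMod d)) :=
              (map_zsmul (Finsupp.singleAddHom (M := ZMod d) i0) k0 1).symm
            rw [h1, zsmul_eq_mul, mul_one]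
          rw [hsi, hsi] at hval2
          have hne : ((k i : ZMod d)) ≠ 0 := fun h0 =>
            hkd i ((ZMod.intCast_zmod_eq_zero_iff_dvd _ _).mp h0)
          rcases (Finsupp.single_eq_single_iff _ _ _ _).mp hval2 with ⟨hij', _⟩ | ⟨h1, _⟩
          · exact hij'
          · exact absurd h1 hne
        have : #ι ≤ #↥Y := Cardinal.mk_le_of_injective hinj
        rw [hι] at this
        exact absurd (lt_of_le_of_lt this hYlt) (lt_irrefl κ)
      obtain ⟨i, hi⟩ := hfresh
      have hu0 : ((d : ℕ) : ℤ) • u (Finsupp.single i 1) = 0 := by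
        rw [← map_zsmul u]
        have : ((d : ℕ) : ℤ) • Finsupp.single i (1 : ZMod d)
            = Finsupp.single i (((d : ℕ) : ℤ) • (1 : ZMod d)) :=
          (map_zsmul (Finsupp.singleAddHom (M := ZMod d) i) _ _).symm
        rw [this]
        have : (((d : ℕ) : ℤ) • (1 : ZMod d)) = 0 := by
          rw [zsmul_eq_mul, mul_one]
          exact_mod_cast ZMod.natCast_self d
        rw [this, Finsupp.single_zero, map_zero]
      set uhom : ZMod d →+ M := ZMod.lift d ⟨zmultiplesHom M (u (Finsupp.single i 1)), hu0⟩
        with huhom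
      set g' : (↥B'' ⧸ Bq) →+ M := uhom.comp ψ.symm.toAddMonoidHom with hg'
      set e0 : ↥B'' →+ M := h + g'.comp π with he0
      have key1 : ∀ b : ↥B, e0 (incl b) = finv b := by
        intro b
        have h1 : π (incl b) = 0 := hπB (incl b) b.2
        have h2 : e0 (incl b) = h (incl b) + g' (π (incl b)) := rfl
        rw [h2, h1, map_zero, add_zero]
        exact DFunLike.congr_fun hh b
      have key2 : Injective e0 := by
        rw [injective_iff_map_eq_zero]
        intro b hb
        have hb' : h b + g' (π b) = 0 := hb
        obtain ⟨k, hk⟩ := ZMod.intCast_surjective (ψ.symm (π b))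
        have hg'val : g' (π b) = k • u (Finsupp.single i 1) := by
          rw [hg']
          show uhom (ψ.symm (π b)) = k • u (Finsupp.single i 1)
          rw [← hk]
          exact ZMod.lift_coe _ _ k
        have hmem : k • u (Finsupp.single i 1) ∈ Y := by
          rw [← hg'val]
          have : g' (π b) = - h b := by
            rw [eq_neg_iff_add_eq_zero, add_comm]
            exact hb'
          rw [this]
          exact neg_mem ⟨b, rfl⟩
        have hdvd := hi k hmem
        have hcast : ((k : ℤ) : ZMod d) = 0 := by
          rw [ZMod.intCast_zmod_eq_zero_iff_dvd]
          exact_mod_cast hdvd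
        have hπb : π b = 0 := by
          have h3 : ψ.symm (π b) = 0 := by rw [← hk, hcast]
          have h4 := congrArg ψ h3
          rwa [AddEquiv.apply_symm_apply, map_zero] at h4
        have hbB : (b : NN ι) ∈ B := AddSubgroup.mem_addSubgroupOf.mp
          (by rwa [hπ, QuotientAddGroup.mk'_apply, QuotientAddGroup.eq_zero_iff] at hπb)
        have hb0 : h b = 0 := by
          have h5 : g' (π b) = 0 := by rw [hπb, map_zero]
          rw [h5, add_zero] at hb'
          exact hb'
        set b0 : ↥B := ⟨(b : NN ι), hbB⟩ with hb0def
        have hinclb : incl b0 = b := Subtype.ext rfl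
        have h6 : finv b0 = 0 := by
          rw [← key1 b0, hinclb]
          show e0 b = 0
          exact hb
        have h7 := gfun_injective hFf hCf (by rw [h6, map_zero] : finv b0 = finv 0)
        have : (b : NN ι) = 0 := congrArg Subtype.val h7
        exact Subtype.ext this
      refine ⟨e0, key2, ?_⟩
      intro m n hmn
      have hnB : n ∈ B := by rw [hBr]; exact mem_gran.mpr ⟨m, hmn⟩
      have hmnf : (n, m) ∈ gflip G := mem_gflip.mpr hmn
      have hfval : finv ⟨n, hnB⟩ = m := gfun_eq hFf hmnf hnB
      have hinclb : incl ⟨n, hnB⟩ = ⟨n, hranB'' (mem_gran.mpr ⟨m, hmn⟩)⟩ := Subtype.ext rfl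
      rw [← hinclb, key1]
      exact hfval
  -- packaging
  set Φ : ↥B'' →+ M × NN ι := e.prod B''.subtype with hΦ
  refine ⟨Φ.range, ?_, ?_, ?_, ?_, ?_, ?_⟩
  · rintro ⟨m, n⟩ hmn
    refine ⟨⟨n, hranB'' (mem_gran.mpr ⟨m, hmn⟩)⟩, ?_⟩
    have h1 : Φ ⟨n, hranB'' (mem_gran.mpr ⟨m, hmn⟩)⟩
        = (e ⟨n, hranB'' (mem_gran.mpr ⟨m, hmn⟩)⟩, n) := rfl
    rw [h1, hagree m n hmn]
  · intro n hn
    obtain ⟨b, hb⟩ := hn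
    have hb1 : e b = 0 := congrArg Prod.fst hb
    have hb2 : (b : NN ι) = n := congrArg Prod.snd hb
    have h8 : b = 0 := heinj (by rw [hb1, map_zero])
    rw [← hb2, h8]
    rfl
  · intro m hm
    obtain ⟨b, hb⟩ := hm
    have hb1 : e b = m := congrArg Prod.fst hb
    have hb2 : (b : NN ι) = 0 := congrArg Prod.snd hb
    have h8 : b = 0 := Subtype.ext hb2
    rw [← hb1, h8, map_zero]
  · exact mem_gran.mpr ⟨e ⟨n₀, hn₀⟩, ⟨⟨n₀, hn₀⟩, rfl⟩⟩
  · exact le_trans (Cardinal.mk_le_of_surjective Φ.rangeRestrict_surjective) hcardB''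
  · intro hfg
    have hBfg : B.FG := by
      rw [hBr]
      exact addFG_map hfg _
    have hB''fg : B''.FG := addFG_sup hBfg (addFG_zmultiples n₀)
    exact addFG_range hB''fg Φ

-- ## combined step
theorem combined_step {κ : Cardinal} {ι M : Type} [AddCommGroup M] (hκ : ℵ₀ ≤ κ) (hι : #ι = κ)
    (hM : #M = κ)
    (hprop : ∀ M₁ : AddSubgroup M, M₁.FG →
      ∀ (M₂ : Type) [AddCommGroup M₂], Cardinal.mk M₂ ≤ κ →
      ∀ j : M₁ →+ M₂, Function.Injective j →
      ∃ e : M₂ →+ M, Function.Injective e ∧ ∀ x : M₁, e (j x) = (x : M))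
    (G : AddSubgroup (M × NN ι)) (hF : GFun G) (hC : GCofun G) (hsm : SmallSub κ G)
    (m₀ : M) (n₀ : NN ι) :
    ∃ G' : AddSubgroup (M × NN ι), G ≤ G' ∧ GFun G' ∧ GCofun G' ∧ m₀ ∈ gdom G' ∧
      n₀ ∈ gran G' ∧ #G' ≤ #G + ℵ₀ ∧ (G.FG → G'.FG) := by
  obtain ⟨G1, hle1, hF1, hC1, hdom1, hcard1, hfg1⟩ := forward_step hκ hι G hF hC hsm m₀
  have hsm1 : SmallSub κ G1 := by
    rcases hsm with ⟨hk, hfg⟩ | ⟨hk, hcard⟩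
    · exact Or.inl ⟨hk, hfg1 hfg⟩
    · refine Or.inr ⟨hk, ?_⟩
      refine lt_of_le_of_lt hcard1 ?_
      rw [Cardinal.add_eq_max' le_rfl]
      exact max_lt hcard hk
  obtain ⟨G2, hle2, hF2, hC2, hran2, hcard2, hfg2⟩ :=
    backward_step hκ hι hM hprop G1 hF1 hC1 hsm1 n₀
  refine ⟨G2, le_trans hle1 hle2, hF2, hC2, ?_, hran2, ?_, fun h => hfg2 (hfg1 h)⟩
  · obtain ⟨n, hn⟩ := mem_gdom.mp hdom1
    exact mem_gdom.mpr ⟨n, hle2 hn⟩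
  · refine le_trans hcard2 ?_
    refine le_trans (add_le_add hcard1 le_rfl) ?_
    rw [add_assoc, Cardinal.aleph0_add_aleph0]

-- ## the transfinite recursion
theorem exists_total_graph {κ : Cardinal} {ι M : Type} [AddCommGroup M]
    (hκ : ℵ₀ ≤ κ) (hι : #ι = κ) (hM : #M = κ)
    (hprop : ∀ M₁ : AddSubgroup M, M₁.FG →
      ∀ (M₂ : Type) [AddCommGroup M₂], Cardinal.mk M₂ ≤ κ →
      ∀ j : M₁ →+ M₂, Function.Injective j →
      ∃ e : M₂ →+ M, Function.Injective e ∧ ∀ x : M₁, e (j x) = (x : M)) :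
    ∃ Gt : AddSubgroup (M × NN ι), GFun Gt ∧ GCofun Gt ∧
      (∀ m : M, m ∈ gdom Gt) ∧ (∀ n : NN ι, n ∈ gran Gt) := by
  classical
  obtain ⟨eM⟩ : Nonempty ((Cardinal.ord κ).ToType ≃ M) :=
    Cardinal.eq.mp (by rw [Cardinal.mk_ord_toType, hM])
  obtain ⟨eN⟩ : Nonempty ((Cardinal.ord κ).ToType ≃ NN ι) :=
    Cardinal.eq.mp (by rw [Cardinal.mk_ord_toType, mk_NN hκ hι])
  let step : AddSubgroup (M × NN ι) → (Cardinal.ord κ).ToType → AddSubgroup (M × NN ι) :=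
    fun G x =>
      if hgood : GFun G ∧ GCofun G ∧ SmallSub κ G then
        (combined_step hκ hι hM hprop G hgood.1 hgood.2.1 hgood.2.2 (eM x) (eN x)).choose
      else ⊥
  let F : (Cardinal.ord κ).ToType → AddSubgroup (M × NN ι) :=
    WellFounded.fix wellFounded_lt
      (fun x ih => step (⨆ y : ↥(Set.Iio x), ih y.1 y.2) x)
  have hFeq : ∀ x, F x = step (⨆ y : ↥(Set.Iio x), F y.1) x :=
    fun x => WellFounded.fix_eq wellFounded_lt _ x
  have hPall : ∀ x : (Cardinal.ord κ).ToType, GFun (F x) ∧ GCofun (F x) ∧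
      (∀ y, y < x → F y ≤ F x) ∧ eM x ∈ gdom (F x) ∧ eN x ∈ gran (F x) ∧
      (κ = ℵ₀ → (F x).FG) ∧ (ℵ₀ < κ → #(F x) ≤ #(Set.Iio x) + ℵ₀) := by
    intro x0
    refine wellFounded_lt.induction
      (C := fun x => GFun (F x) ∧ GCofun (F x) ∧
        (∀ y, y < x → F y ≤ F x) ∧ eM x ∈ gdom (F x) ∧ eN x ∈ gran (F x) ∧
        (κ = ℵ₀ → (F x).FG) ∧ (ℵ₀ < κ → #(F x) ≤ #(Set.Iio x) + ℵ₀)) x0 ?_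
    intro x ih
    have hdir : Directed (· ≤ ·) (fun y : ↥(Set.Iio x) => F y.1) := by
      intro a b
      rcases le_total a.1 b.1 with hab | hab
      · refine ⟨b, ?_, le_rfl⟩
        show F a.1 ≤ F b.1
        rcases lt_or_eq_of_le hab with hlt | heq
        · exact (ih b.1 b.2).2.2.1 a.1 hlt
        · rw [heq]
      · refine ⟨a, le_rfl, ?_⟩
        show F b.1 ≤ F a.1
        rcases lt_or_eq_of_le hab with hlt | heq
        · exact (ih a.1 a.2).2.2.1 b.1 hlt
        · rw [← heq]
    have hUfun : GFun (⨆ y : ↥(Set.Iio x), F y.1) ∧ GCofun (⨆ y : ↥(Set.Iio x), F y.1) := by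
      rcases isEmpty_or_nonempty ↥(Set.Iio x) with he | hne
      · rw [iSup_of_empty]
        constructor
        · intro n hn
          rw [AddSubgroup.mem_bot] at hn
          exact congrArg Prod.snd hn
        · intro m hm
          rw [AddSubgroup.mem_bot] at hm
          exact congrArg Prod.fst hm
      · constructor
        · intro n hn
          obtain ⟨y, hy⟩ := (AddSubgroup.mem_iSup_of_directed hdir).mp hn
          exact (ih y.1 y.2).1 n hy
        · intro m hm
          obtain ⟨y, hy⟩ := (AddSubgroup.mem_iSup_of_directed hdir).mp hm
          exact (ih y.1 y.2).2.1 m hy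
    have hUcard : ℵ₀ < κ → #(⨆ y : ↥(Set.Iio x), F y.1 : AddSubgroup (M × NN ι))
        ≤ #(Set.Iio x) + ℵ₀ := by
      intro hlt
      rcases isEmpty_or_nonempty ↥(Set.Iio x) with he | hne
      · rw [iSup_of_empty]
        have hsub : Subsingleton ↥(⊥ : AddSubgroup (M × NN ι)) :=
          ⟨fun a b => Subtype.ext
            (by rw [AddSubgroup.mem_bot.mp a.2, AddSubgroup.mem_bot.mp b.2])⟩
        exact le_trans (le_trans (Cardinal.le_one_iff_subsingleton.mpr hsub)
          Cardinal.one_le_aleph0) le_add_self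
      · have hcoe : ((⨆ y : ↥(Set.Iio x), F y.1 : AddSubgroup (M × NN ι)) :
            Set (M × NN ι)) = ⋃ y : ↥(Set.Iio x), (F y.1 : Set (M × NN ι)) :=
          AddSubgroup.coe_iSup_of_directed hdir
        have h1 : #(⨆ y : ↥(Set.Iio x), F y.1 : AddSubgroup (M × NN ι))
            = #(⋃ y : ↥(Set.Iio x), (F y.1 : Set (M × NN ι))) :=
          Cardinal.mk_congr (Equiv.setCongr hcoe)
        rw [h1]
        refine le_trans (Cardinal.mk_iUnion_le _) ?_
        have h2 : ⨆ y : ↥(Set.Iio x), #(F y.1 : Set (M × NN ι)) ≤ #(Set.Iio x) + ℵ₀ := by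
          refine ciSup_le' ?_
          intro y
          refine le_trans ((ih y.1 y.2).2.2.2.2.2.2 hlt) (add_le_add ?_ le_rfl)
          exact Cardinal.mk_le_mk_of_subset (Set.Iio_subset_Iio (le_of_lt y.2))
        refine le_trans (mul_le_mul' le_rfl h2) ?_
        refine le_trans (mul_le_mul' (le_self_add (a := #(Set.Iio x)) (b := ℵ₀)) le_rfl) ?_
        exact le_of_eq (Cardinal.mul_eq_self le_add_self)
    have hUfg : κ = ℵ₀ → (⨆ y : ↥(Set.Iio x), F y.1 : AddSubgroup (M × NN ι)).FG := by
      intro heqk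
      rcases isEmpty_or_nonempty ↥(Set.Iio x) with he | hne
      · rw [iSup_of_empty]
        exact ⟨∅, by simp⟩
      · have hfin : (Set.Iio x).Finite := by
          rw [← Set.finite_coe_iff, ← Cardinal.lt_aleph0_iff_finite, ← heqk]
          exact Cardinal.mk_Iio_ord_toType x
        obtain ⟨b, hbT, hbmax⟩ : ∃ b ∈ Set.Iio x, ∀ a ∈ Set.Iio x, b ≤ a → b = a := by
          obtain ⟨b, hb⟩ := Set.Finite.exists_maximal hfin (Set.nonempty_coe_sort.mp hne)
          exact ⟨b, hb.1, fun a ha hba => le_antisymm hba (hb.2 ha hba)⟩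
        have hUb : (⨆ y : ↥(Set.Iio x), F y.1 : AddSubgroup (M × NN ι)) = F b := by
          apply le_antisymm
          · refine iSup_le ?_
            intro y
            show F y.1 ≤ F b
            rcases le_or_gt y.1 b with hyb | hby
            · rcases lt_or_eq_of_le hyb with hlt2 | heq2
              · exact (ih b hbT).2.2.1 y.1 hlt2
              · rw [heq2]
            · have hbe : b = y.1 := hbmax y.1 y.2 (le_of_lt hby)
              rw [hbe]
          · exact le_iSup (fun y : ↥(Set.Iio x) => F y.1) ⟨b, hbT⟩
        rw [hUb]
        exact (ih b hbT).2.2.2.2.2.1 heqk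
    have hUsm : SmallSub κ (⨆ y : ↥(Set.Iio x), F y.1) := by
      rcases lt_or_eq_of_le hκ with hlt | heqk
      · refine Or.inr ⟨hlt, ?_⟩
        refine lt_of_le_of_lt (hUcard hlt) ?_
        rw [Cardinal.add_eq_max' le_rfl]
        exact max_lt (Cardinal.mk_Iio_ord_toType x) hlt
      · exact Or.inl ⟨heqk.symm, hUfg heqk.symm⟩
    have hgood : GFun (⨆ y : ↥(Set.Iio x), F y.1) ∧ GCofun (⨆ y : ↥(Set.Iio x), F y.1) ∧
        SmallSub κ (⨆ y : ↥(Set.Iio x), F y.1) := ⟨hUfun.1, hUfun.2, hUsm⟩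
    have hFx : F x = (combined_step hκ hι hM hprop (⨆ y : ↥(Set.Iio x), F y.1)
        hgood.1 hgood.2.1 hgood.2.2 (eM x) (eN x)).choose := by
      rw [hFeq x]
      show step (⨆ y : ↥(Set.Iio x), F y.1) x = _
      rw [show step = fun G x =>
        if hgood : GFun G ∧ GCofun G ∧ SmallSub κ G then
          (combined_step hκ hι hM hprop G hgood.1 hgood.2.1 hgood.2.2
            (eM x) (eN x)).choose
        else ⊥ from rfl]
      simp only
      rw [dif_pos hgood]
    obtain ⟨hle, hf, hc, hdm, hrn, hcd, hfg⟩ := (combined_step hκ hι hM hprop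
      (⨆ y : ↥(Set.Iio x), F y.1) hgood.1 hgood.2.1 hgood.2.2 (eM x) (eN x)).choose_spec
    refine ⟨by rw [hFx]; exact hf, by rw [hFx]; exact hc, ?_, by rw [hFx]; exact hdm,
      by rw [hFx]; exact hrn, ?_, ?_⟩
    · intro y hy
      have h1 : F y ≤ ⨆ y : ↥(Set.Iio x), F y.1 :=
        le_iSup (fun y : ↥(Set.Iio x) => F y.1) ⟨y, hy⟩
      rw [hFx]
      exact le_trans h1 hle
    · intro heqk
      rw [hFx]
      exact hfg (hUfg heqk)
    · intro hlt
      rw [hFx]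
      refine le_trans hcd ?_
      refine le_trans (add_le_add (hUcard hlt) le_rfl) ?_
      rw [add_assoc, Cardinal.aleph0_add_aleph0]
  have hdirAll : Directed (· ≤ ·) F := by
    intro a b
    rcases le_total a b with hab | hab
    · refine ⟨b, ?_, le_rfl⟩
      rcases lt_or_eq_of_le hab with hlt | heq
      · exact (hPall b).2.2.1 a hlt
      · rw [heq]
    · refine ⟨a, le_rfl, ?_⟩
      rcases lt_or_eq_of_le hab with hlt | heq
      · exact (hPall a).2.2.1 b hlt
      · rw [← heq]
  have hne : Nonempty ((Cardinal.ord κ).ToType) := by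
    rw [Ordinal.toType_nonempty_iff_ne_zero]
    intro h0
    rw [Cardinal.ord_eq_zero] at h0
    rw [h0] at hκ
    rw [le_zero_iff] at hκ
    exact Cardinal.aleph0_ne_zero hκ
  refine ⟨⨆ x, F x, ?_, ?_, ?_, ?_⟩
  · intro n hn
    obtain ⟨y, hy⟩ := (AddSubgroup.mem_iSup_of_directed hdirAll).mp hn
    exact (hPall y).1 n hy
  · intro m hm
    obtain ⟨y, hy⟩ := (AddSubgroup.mem_iSup_of_directed hdirAll).mp hm
    exact (hPall y).2.1 m hy
  · intro m
    obtain ⟨n, hn⟩ := mem_gdom.mp (hPall (eM.symm m)).2.2.2.1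
    rw [Equiv.apply_symm_apply] at hn
    exact mem_gdom.mpr ⟨n, le_iSup F (eM.symm m) hn⟩
  · intro n
    obtain ⟨m, hm⟩ := mem_gran.mp (hPall (eN.symm n)).2.2.2.2.1
    rw [Equiv.apply_symm_apply] at hm
    exact mem_gran.mpr ⟨m, le_iSup F (eN.symm n) hm⟩

end
end Stmt18Aux

open Stmt18Aux in
theorem stmt18 (κ : Cardinal) (hκ : Cardinal.aleph0 ≤ κ)
    (ι : Type) (hι : Cardinal.mk ι = κ)
    (M : Type) [AddCommGroup M] (hM : Cardinal.mk M = κ)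
    (hprop : ∀ M₁ : AddSubgroup M, M₁.FG →
      ∀ (M₂ : Type) [AddCommGroup M₂], Cardinal.mk M₂ ≤ κ →
      ∀ j : M₁ →+ M₂, Function.Injective j →
      ∃ e : M₂ →+ M, Function.Injective e ∧ ∀ x : M₁, e (j x) = (x : M)) :
    Nonempty (M ≃+ ((ι →₀ ℚ) × (ι →₀ (ℚ ⧸ AddSubgroup.zmultiples (1 : ℚ))))) := by
  classical
  obtain ⟨Gt, hF, hC, hdom, hran⟩ := exists_total_graph hκ hι hM hprop
  have htot : ∀ m : M, ∃ n : NN ι, (m, n) ∈ Gt := fun m => mem_gdom.mp (hdom m)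
  have hsurj : ∀ n : NN ι, ∃ m : M, (m, n) ∈ Gt := fun n => mem_gran.mp (hran n)
  set φ : M → NN ι := fun m => (htot m).choose with hφ
  have hφmem : ∀ m, (m, φ m) ∈ Gt := fun m => (htot m).choose_spec
  have hadd : ∀ a b : M, φ (a + b) = φ a + φ b := by
    intro a b
    exact guniq hF (hφmem (a + b)) (Gt.add_mem (hφmem a) (hφmem b))
  set Φ : M →+ NN ι := AddMonoidHom.mk' φ hadd with hΦ
  have hinj : Function.Injective Φ := by
    intro a b hab
    have hab' : φ a = φ b := hab
    have h1 : (a - b, (0 : NN ι)) ∈ Gt := by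
      have h0 := Gt.sub_mem (hφmem a) (hφmem b)
      have h2 : φ a - φ b = 0 := by rw [hab', sub_self]
      rwa [show ((a, φ a) - (b, φ b) : M × NN ι) = (a - b, φ a - φ b) from rfl, h2] at h0
    exact sub_eq_zero.mp (hC _ h1)
  have hsur : Function.Surjective Φ := by
    intro n
    obtain ⟨m, hm⟩ := hsurj n
    exact ⟨m, guniq hF (hφmem m) hm⟩
  exact ⟨AddEquiv.ofBijective Φ ⟨hinj, hsur⟩⟩
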